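/- For any finite group G, m(G) ≤ MaxDim(G) ≤ i(G). -/
import Mathlib


/-- A finite subset of a group is irredundant if no element lies in the
subgroup generated by the remaining elements. -/
def Irredundant {G : Type*} [Group G] (s : Finset G) : Prop :=
  ∀ g ∈ s, g ∉ Subgroup.closure ((s : Set G) \ {g})

/-- `mRank G` : maximal size of an irredundant generating set of `G`. -/
noncomputable def mRank (G : Type*) [Group G] : ℕ :=
  sSup {n | ∃ s : Finset G, Irredundant s ∧ Subgroup.closure (s : Set G) = ⊤ ∧ s.card = n}

/-- `iRank G` : maximal size of an irredundant subset of `G`. -/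
noncomputable def iRank (G : Type*) [Group G] : ℕ :=
  sSup {n | ∃ s : Finset G, Irredundant s ∧ s.card = n}

/-- A family of subgroups is in general position. -/
def GenPos {G : Type*} [Group G] {ι : Type*} (H : ι → Subgroup G) : Prop :=
  ∀ I J : Finset ι, I ⊂ J → (⨅ j ∈ J, H j) < (⨅ i ∈ I, H i)

/-- Maximal size of a family of maximal subgroups in general position. -/
noncomputable def MaxDim (G : Type*) [Group G] : ℕ :=
  sSup {k | ∃ M : Fin k → Subgroup G, (∀ j, IsCoatom (M j)) ∧ GenPos M}

-- Lemma A: general position family gives an irredundant set of the same size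
lemma genpos_irred {G : Type*} [Group G] {k : ℕ} (M : Fin k → Subgroup G)
    (hgp : GenPos M) : ∃ s : Finset G, Irredundant s ∧ s.card = k := by
  have hch : ∀ j : Fin k, ∃ x : G, (∀ i, i ≠ j → x ∈ M i) ∧ x ∉ M j := by
    intro j
    have h := hgp (Finset.univ.erase j) Finset.univ (Finset.erase_ssubset (Finset.mem_univ j))
    obtain ⟨x, hx1, hx2⟩ := SetLike.exists_of_lt h
    simp only [Subgroup.mem_iInf, Finset.mem_erase, Finset.mem_univ, and_true] at hx1 hx2
    refine ⟨x, fun i hi => hx1 i hi, fun hxj => hx2 (fun i _ => ?_)⟩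
    rcases eq_or_ne i j with rfl | hne
    · exact hxj
    · exact hx1 i hne
  choose g hg hgj using hch
  classical
  have hinj : Function.Injective g := by
    intro i j hij
    by_contra hne
    exact hgj j (hij ▸ hg i j (Ne.symm hne))
  refine ⟨Finset.image g Finset.univ, ?_, by
    rw [Finset.card_image_of_injective _ hinj, Finset.card_univ, Fintype.card_fin]⟩
  intro x hx
  obtain ⟨j, _, rfl⟩ := Finset.mem_image.mp hx
  intro hmem
  apply hgj j
  have hle : Subgroup.closure ((Finset.image g Finset.univ : Set G) \ {g j}) ≤ M j := by
    apply (Subgroup.closure_le _).mpr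
    rintro y ⟨hy1, hy2⟩
    simp only [Finset.coe_image, Set.mem_image] at hy1
    obtain ⟨i, _, rfl⟩ := hy1
    have : j ≠ i := fun h => hy2 (by rw [h]; exact rfl)
    exact hg i j this
  exact hle hmem

-- Lemma B: irredundant generating set gives coatoms in general position
lemma irred_gen_genpos {G : Type*} [Group G] [Finite G] (s : Finset G)
    (hirr : Irredundant s) (hgen : Subgroup.closure (s : Set G) = ⊤) :
    ∃ M : Fin s.card → Subgroup G, (∀ j, IsCoatom (M j)) ∧ GenPos M := by
  let e : Fin s.card ≃ s := s.equivFin.symm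
  have hch : ∀ j : Fin s.card, ∃ M : Subgroup G, IsCoatom M ∧
      Subgroup.closure ((s : Set G) \ {(e j : G)}) ≤ M := by
    intro j
    have hne : Subgroup.closure ((s : Set G) \ {(e j : G)}) ≠ ⊤ := by
      intro h
      apply hirr (e j) (e j).2
      rw [h]; trivial
    obtain ⟨M, hM, hle⟩ :=
      (IsCoatomic.eq_top_or_exists_le_coatom
        (Subgroup.closure ((s : Set G) \ {(e j : G)}))).resolve_left hne
    exact ⟨M, hM, hle⟩
  choose M hM hMle using hch
  have hnotin : ∀ j, (e j : G) ∉ M j := by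
    intro j hmem
    apply (hM j).1
    rw [eq_top_iff, ← hgen]
    apply (Subgroup.closure_le _).mpr
    intro y hy
    rcases eq_or_ne y (e j : G) with rfl | hne
    · exact hmem
    · exact hMle j (Subgroup.subset_closure ⟨hy, hne⟩)
  have hin : ∀ i j, i ≠ j → (e i : G) ∈ M j := by
    intro i j hij
    apply hMle j
    apply Subgroup.subset_closure
    refine ⟨(e i).2, ?_⟩
    simp only [Set.mem_singleton_iff]
    intro h
    exact hij (e.injective (Subtype.ext h))
  refine ⟨M, hM, ?_⟩
  intro I J hIJ
  have hle : (⨅ j ∈ J, M j) ≤ ⨅ i ∈ I, M i :=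
    le_iInf₂ fun i hi => iInf₂_le i (hIJ.1 hi)
  refine lt_of_le_of_ne hle ?_
  obtain ⟨j, hjJ, hjI⟩ := Finset.exists_of_ssubset hIJ
  intro heq
  have h1 : (e j : G) ∈ ⨅ i ∈ I, M i := by
    apply Subgroup.mem_iInf.mpr
    intro i
    apply Subgroup.mem_iInf.mpr
    intro hi
    exact hin j i (fun h => hjI (h ▸ hi))
  rw [← heq] at h1
  have h2 : (e j : G) ∈ M j := by
    have := Subgroup.mem_iInf.mp h1 j
    exact Subgroup.mem_iInf.mp this hjJ
  exact hnotin j h2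

lemma card_bdd {G : Type*} [Group G] [Finite G] (s : Finset G) :
    s.card ≤ Nat.card G := by
  have := Fintype.ofFinite G
  rw [Nat.card_eq_fintype_card]
  exact s.card_le_univ

theorem stmt15 {G : Type*} [Group G] [Finite G] :
    mRank G ≤ MaxDim G ∧ MaxDim G ≤ iRank G := by
  have bdd2 : BddAbove {k | ∃ M : Fin k → Subgroup G, (∀ j, IsCoatom (M j)) ∧ GenPos M} := by
    refine ⟨Nat.card G, ?_⟩
    rintro k ⟨M, _, hgp⟩
    obtain ⟨s, _, hc⟩ := genpos_irred M hgp
    exact hc ▸ card_bdd s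
  have bdd3 : BddAbove {n | ∃ s : Finset G, Irredundant s ∧ s.card = n} := by
    refine ⟨Nat.card G, ?_⟩
    rintro n ⟨s, _, hc⟩
    exact hc ▸ card_bdd s
  constructor
  · apply csSup_le'
    rintro n ⟨s, hirr, hgen, rfl⟩
    obtain ⟨M, hM, hgp⟩ := irred_gen_genpos s hirr hgen
    exact le_csSup bdd2 ⟨M, hM, hgp⟩
  · apply csSup_le'
    rintro k ⟨M, _, hgp⟩
    obtain ⟨s, hirr, hc⟩ := genpos_irred M hgp
    exact le_csSup bdd3 ⟨s, hirr, hc⟩
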